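/- There exists a constant C₁ > 0 with the following property: for every real k ≥ 1, every T ≤ −4, every C > 0, and every continuous function M : (−∞, T] → ℝ with |M(t)| ≤ C/t² for all t ≤ T, there exists a unique bounded, twice continuously differentiable function A : (−∞, T] → ℝ satisfying −A''(t) + k²·A(t) = M(t) for all t ≤ T and A(T) = 0; moreover this solution satisfies |A(t)| ≤ C₁·C/(k²·t²) for all t ≤ T. -/

import Mathlib

open MeasureTheory Set Filter Real Topology

lemma myExpDeriv {k : ℝ} (hk : k ≠ 0) (x : ℝ) :
    HasDerivAt (fun y => Real.exp (k * y) / k) (Real.exp (k * x)) x := by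
  have h := (((hasDerivAt_id x).const_mul k).exp).div_const k
  refine h.congr_deriv (Eq.symm ?_)
  field_simp
  rfl

lemma myExpInt {k : ℝ} (hk : 1 ≤ k) (r : ℝ) :
    IntegrableOn (fun x => Real.exp (k * x)) (Set.Iic r) := by
  refine Integrable.mono' ((integrableOn_exp_Iic r).const_mul (Real.exp ((k - 1) * r))) ?_ ?_
  · exact (Real.continuous_exp.comp (continuous_const.mul continuous_id)).aestronglyMeasurable
  · filter_upwards [ae_restrict_mem measurableSet_Iic] with x hx
    have hxr : x ≤ r := hx
    have : k * x ≤ (k - 1) * r + x := by nlinarith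
    simp only [Real.norm_eq_abs, abs_of_pos (Real.exp_pos _)]
    rw [← Real.exp_add]
    exact Real.exp_le_exp.mpr this

lemma myExpIntVal {k : ℝ} (hk : 1 ≤ k) (r : ℝ) :
    ∫ x in Set.Iic r, Real.exp (k * x) = Real.exp (k * r) / k := by
  have h0 : (0:ℝ) < k := lt_of_lt_of_le one_pos hk
  have hd : ∀ x ∈ Set.Iic r, HasDerivAt (fun y => Real.exp (k * y) / k)
      (Real.exp (k * x)) x := fun x _ => myExpDeriv h0.ne' x
  have ht : Tendsto (fun y => Real.exp (k * y) / k) atBot (𝓝 0) := by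
    have h1 : Tendsto (fun y : ℝ => k * y) atBot atBot :=
      Tendsto.const_mul_atBot h0 tendsto_id
    simpa using (Real.tendsto_exp_atBot.comp h1).div_const k
  have := integral_Iic_of_hasDerivAt_of_tendsto' hd (myExpInt hk r) ht
  simpa using this

lemma myExpIntervalVal {k : ℝ} (hk : 1 ≤ k) (a b : ℝ) :
    ∫ x in a..b, Real.exp (k * x) = Real.exp (k * b) / k - Real.exp (k * a) / k := by
  have h0 : (0:ℝ) < k := lt_of_lt_of_le one_pos hk
  exact intervalIntegral.integral_eq_sub_of_hasDerivAt (fun x _ => myExpDeriv h0.ne' x)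
    ((Real.continuous_exp.comp (continuous_const.mul continuous_id)).intervalIntegrable a b)

lemma myKeyInt {k B : ℝ} (hk : 1 ≤ k) {g : ℝ → ℝ} (hg : Continuous g)
    (hB : ∀ s, |g s| ≤ B) (r : ℝ) :
    IntegrableOn (fun σ => Real.exp (k * σ) * g σ) (Set.Iic r) := by
  refine Integrable.mono' ((myExpInt hk r).const_mul B) ?_ ?_
  · exact ((Real.continuous_exp.comp (continuous_const.mul continuous_id)).mul
      hg).aestronglyMeasurable
  · filter_upwards [ae_restrict_mem measurableSet_Iic] with x _
    have h1 : |Real.exp (k * x) * g x| = Real.exp (k * x) * |g x| := by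
      rw [abs_mul, abs_of_pos (Real.exp_pos _)]
    rw [Real.norm_eq_abs, h1, mul_comm B]
    exact mul_le_mul_of_nonneg_left (hB x) (Real.exp_pos _).le

lemma myKeyDeriv {k B : ℝ} (hk : 1 ≤ k) {g : ℝ → ℝ} (hg : Continuous g)
    (hB : ∀ s, |g s| ≤ B) (t : ℝ) :
    HasDerivAt (fun r => ∫ σ in Set.Iic r, Real.exp (k * σ) * g σ)
      (Real.exp (k * t) * g t) t := by
  have hco : Continuous fun σ => Real.exp (k * σ) * g σ :=
    (Real.continuous_exp.comp (continuous_const.mul continuous_id)).mul hg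
  have heq : ∀ r, (∫ σ in Set.Iic r, Real.exp (k * σ) * g σ)
      = (∫ σ in Set.Iic 0, Real.exp (k * σ) * g σ)
        + ∫ σ in (0:ℝ)..r, Real.exp (k * σ) * g σ := by
    intro r
    rw [← intervalIntegral.integral_Iic_sub_Iic (myKeyInt hk hg hB 0) (myKeyInt hk hg hB r)]
    ring
  exact ((intervalIntegral.integral_hasDerivAt_right (hco.intervalIntegrable _ _)
    hco.aestronglyMeasurable.stronglyMeasurableAtFilter hco.continuousAt).const_add
    _).congr_of_eventuallyEq (Filter.Eventually.of_forall heq)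

lemma myKeyBound {k B B' : ℝ} (hk : 1 ≤ k) {g : ℝ → ℝ} (hg : Continuous g)
    (hB : ∀ s, |g s| ≤ B) (r : ℝ) (hb : ∀ σ ≤ r, |g σ| ≤ B') :
    |∫ σ in Set.Iic r, Real.exp (k * σ) * g σ| ≤ B' * (Real.exp (k * r) / k) := by
  have h1 : ‖∫ σ in Set.Iic r, Real.exp (k * σ) * g σ‖
      ≤ ∫ σ in Set.Iic r, B' * Real.exp (k * σ) := by
    refine MeasureTheory.norm_integral_le_of_norm_le ((myExpInt hk r).const_mul B') ?_
    filter_upwards [ae_restrict_mem measurableSet_Iic] with σ hσ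
    have h2 : |Real.exp (k * σ) * g σ| = Real.exp (k * σ) * |g σ| := by
      rw [abs_mul, abs_of_pos (Real.exp_pos _)]
    rw [Real.norm_eq_abs, h2, mul_comm B']
    exact mul_le_mul_of_nonneg_left (hb σ hσ) (Real.exp_pos _).le
  rw [MeasureTheory.integral_const_mul, myExpIntVal hk r] at h1
  exact h1

/-- `A` is a bounded, twice continuously differentiable solution on `(−∞, T]` of
`−A'' + k² A = M` with `A(T) = 0`. -/
def IsModeSolution (k T : ℝ) (M A : ℝ → ℝ) : Prop :=
  (∃ K : ℝ, ∀ t ≤ T, |A t| ≤ K) ∧ ContDiffOn ℝ 2 A (Set.Iic T) ∧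
    (∀ t ≤ T, -deriv (deriv A) t + k ^ 2 * A t = M t) ∧ A T = 0


lemma myUniq {k T : ℝ} (hk : 1 ≤ k) (hT : T ≤ -4) {M A₁ A₂ : ℝ → ℝ}
    (h1 : IsModeSolution k T M A₁) (h2 : IsModeSolution k T M A₂) :
    Set.EqOn A₁ A₂ (Set.Iic T) := by
  have h0 : (0:ℝ) < k := lt_of_lt_of_le one_pos hk
  obtain ⟨⟨K₁, hK₁⟩, hs₁, he₁, hT₁⟩ := h1
  obtain ⟨⟨K₂, hK₂⟩, hs₂, he₂, hT₂⟩ := h2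
  set D : ℝ → ℝ := fun t => A₁ t - A₂ t with hD_def
  set E : ℝ → ℝ := fun t => deriv A₁ t - deriv A₂ t with hE_def
  -- regularity on the open set Iio T
  have hca : ∀ (A : ℝ → ℝ), ContDiffOn ℝ 2 A (Set.Iic T) →
      ∀ t ∈ Set.Iio T, DifferentiableAt ℝ A t ∧ DifferentiableAt ℝ (deriv A) t := by
    intro A hA t ht
    have hAo : ContDiffOn ℝ 2 A (Set.Iio T) := hA.mono Iio_subset_Iic_self
    rw [show (2 : WithTop ℕ∞) = 1 + 1 by norm_num,
      contDiffOn_succ_iff_deriv_of_isOpen isOpen_Iio] at hAo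
    refine ⟨(hAo.1 t ht).differentiableAt (Iio_mem_nhds ht), ?_⟩
    exact ((hAo.2.2.differentiableOn one_ne_zero) t ht).differentiableAt (Iio_mem_nhds ht)
  have hD1 : ∀ t ∈ Set.Iio T, HasDerivAt D (E t) t := by
    intro t ht
    exact ((hca A₁ hs₁ t ht).1.hasDerivAt.sub (hca A₂ hs₂ t ht).1.hasDerivAt)
  have hD2 : ∀ t ∈ Set.Iio T, HasDerivAt E (k^2 * D t) t := by
    intro t ht
    have h := ((hca A₁ hs₁ t ht).2.hasDerivAt.sub (hca A₂ hs₂ t ht).2.hasDerivAt)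
    have e1 : -deriv (deriv A₁) t + k ^ 2 * A₁ t = M t := he₁ t ht.le
    have e2 : -deriv (deriv A₂) t + k ^ 2 * A₂ t = M t := he₂ t ht.le
    have : deriv (deriv A₁) t - deriv (deriv A₂) t = k^2 * D t := by
      simp only [hD_def]; linarith
    rwa [this] at h
  -- two first-order quantities, each constant on Iio T
  have hconst : ∀ f : ℝ → ℝ, (∀ t ∈ Set.Iio T, HasDerivAt f 0 t) →
      ∀ x ∈ Set.Iio T, ∀ y ∈ Set.Iio T, f x = f y := by
    intro f hf x hx y hy
    refine Convex.is_const_of_fderivWithin_eq_zero (convex_Iio T)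
      (fun z hz => (hf z hz).differentiableAt.differentiableWithinAt) ?_ hx hy
    intro z hz
    rw [fderivWithin_of_isOpen isOpen_Iio hz,
      (hf z hz).hasFDerivAt.fderiv]
    ext y; simp
  have hf₁ : ∀ t ∈ Set.Iio T, HasDerivAt (fun t => Real.exp (k * t) * (E t - k * D t)) 0 t := by
    intro t ht
    have h := (((hasDerivAt_id t).const_mul k).exp).mul ((hD2 t ht).sub ((hD1 t ht).const_mul k))
    refine h.congr_deriv (Eq.symm ?_)
    simp only [id, Pi.sub_apply]
    ring
  have hf₂ : ∀ t ∈ Set.Iio T, HasDerivAt (fun t => Real.exp (k * -t) * (E t + k * D t)) 0 t := by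
    intro t ht
    have h := (((hasDerivAt_neg t).const_mul k).exp).mul ((hD2 t ht).add ((hD1 t ht).const_mul k))
    refine h.congr_deriv (Eq.symm ?_)
    simp only [Pi.add_apply]
    ring
  have hT1 : T - 1 ∈ Set.Iio T := by simp
  set c₁ : ℝ := Real.exp (k * (T-1)) * (E (T-1) - k * D (T-1)) with hc₁_def
  set c₂ : ℝ := Real.exp (k * -(T-1)) * (E (T-1) + k * D (T-1)) with hc₂_def
  have hmul : ∀ t : ℝ, Real.exp (k * -t) * Real.exp (k * t) = 1 := by
    intro t; rw [← Real.exp_add, show k * -t + k * t = 0 by ring, Real.exp_zero]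
  have key : ∀ t ∈ Set.Iio T, 2 * k * D t = c₂ * Real.exp (k * t) - c₁ * Real.exp (k * -t) := by
    intro t ht
    have e1 : Real.exp (k * t) * (E t - k * D t) = c₁ := hconst _ hf₁ t ht (T-1) hT1
    have e2 : Real.exp (k * -t) * (E t + k * D t) = c₂ := hconst _ hf₂ t ht (T-1) hT1
    have q := hmul t
    rw [← e1, ← e2]
    linear_combination (-(2 * k * D t)) * q
  -- c₁ = 0 by boundedness
  have hKb : ∀ t ≤ T, |D t| ≤ K₁ + K₂ := by
    intro t ht
    have := abs_sub (A₁ t) (A₂ t)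
    calc |D t| ≤ |A₁ t| + |A₂ t| := abs_sub _ _
    _ ≤ K₁ + K₂ := add_le_add (hK₁ t ht) (hK₂ t ht)
  set B : ℝ := |c₂| * Real.exp (k * T) + 2 * k * (K₁ + K₂) with hB_def
  have hc₁bd : ∀ t ∈ Set.Iio T, |c₁| ≤ B * Real.exp (k * t) := by
    intro t ht
    have hkey := key t ht
    have h1 : |c₁ * Real.exp (k * -t)| ≤ |c₂ * Real.exp (k * t)| + |2 * k * D t| := by
      rw [show c₁ * Real.exp (k * -t) = c₂ * Real.exp (k * t) - 2 * k * D t by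
        linarith [hkey]]
      exact abs_sub _ _
    have h2 : |c₂ * Real.exp (k * t)| ≤ |c₂| * Real.exp (k * T) := by
      rw [abs_mul, abs_of_pos (Real.exp_pos _)]
      exact mul_le_mul_of_nonneg_left
        (Real.exp_le_exp.mpr (mul_le_mul_of_nonneg_left ht.le h0.le)) (abs_nonneg _)
    have h3 : |2 * k * D t| ≤ 2 * k * (K₁ + K₂) := by
      rw [abs_mul, abs_of_pos (by positivity : (0:ℝ) < 2 * k)]
      exact mul_le_mul_of_nonneg_left (hKb t ht.le) (by positivity)
    have h4 : |c₁| * Real.exp (k * -t) ≤ B := by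
      rw [← abs_of_pos (Real.exp_pos (k * -t)), ← abs_mul]
      calc |c₁ * Real.exp (k * -t)| ≤ |c₂| * Real.exp (k * T) + 2 * k * (K₁ + K₂) :=
        le_trans h1 (add_le_add h2 h3)
      _ = B := rfl
    have h5 : |c₁| = (|c₁| * Real.exp (k * -t)) * Real.exp (k * t) := by
      rw [mul_assoc, hmul t, mul_one]
    rw [h5]
    exact mul_le_mul_of_nonneg_right h4 (Real.exp_pos _).le
  have htend : Tendsto (fun t : ℝ => B * Real.exp (k * t)) atBot (𝓝 0) := by
    have h1 : Tendsto (fun t : ℝ => k * t) atBot atBot :=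
      Tendsto.const_mul_atBot h0 tendsto_id
    have h2 : Tendsto (fun t : ℝ => Real.exp (k * t)) atBot (𝓝 0) :=
      Real.tendsto_exp_atBot.comp h1
    simpa using h2.const_mul B
  have hc₁0 : c₁ = 0 := by
    have h6 : |c₁| ≤ 0 := by
      refine ge_of_tendsto htend ?_
      filter_upwards [eventually_lt_atBot T] with t ht
      exact hc₁bd t ht
    exact abs_eq_zero.mp (le_antisymm h6 (abs_nonneg _))
  -- continuity at T forces c₂ = 0
  have hDc : ContinuousOn D (Set.Iic T) :=
    (hs₁.continuousOn).sub (hs₂.continuousOn)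
  have hDT : D T = 0 := by simp [hD_def, hT₁, hT₂]
  have hc₂0 : c₂ = 0 := by
    have hlim1 : Tendsto D (𝓝[Set.Iio T] T) (𝓝 0) := by
      have h := (hDc T self_mem_Iic).mono Iio_subset_Iic_self
      rw [ContinuousWithinAt, hDT] at h
      exact h
    have hlim2 : Tendsto (fun t => c₂ / (2 * k) * Real.exp (k * t)) (𝓝[Set.Iio T] T)
        (𝓝 (c₂ / (2 * k) * Real.exp (k * T))) := by
      exact ((continuous_const.mul
        (Real.continuous_exp.comp (continuous_const.mul continuous_id))).tendsto
        T).mono_left nhdsWithin_le_nhds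
    have heq : ∀ᶠ t in 𝓝[Set.Iio T] T, D t = c₂ / (2 * k) * Real.exp (k * t) := by
      filter_upwards [self_mem_nhdsWithin] with t ht
      have := key t ht
      rw [hc₁0] at this
      field_simp
      linarith [this]
    have := tendsto_nhds_unique (hlim1.congr' heq) hlim2
    have hexp : Real.exp (k * T) ≠ 0 := (Real.exp_pos _).ne'
    field_simp at this
    rcases mul_eq_zero.mp (by linarith : c₂ * Real.exp (k * T) = 0) with h | h
    · exact h
    · exact absurd h hexp
  -- conclude
  intro t ht
  rcases eq_or_lt_of_le (show t ≤ T from ht) with rfl | hlt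
  · rw [hT₁, hT₂]
  · have := key t hlt
    rw [hc₁0, hc₂0] at this
    have hD0 : D t = 0 := by
      have h2k : (0:ℝ) < 2 * k := by positivity
      nlinarith [this]
    have : A₁ t - A₂ t = 0 := hD0
    linarith


lemma myDivLe {a b c : ℝ} (ha : 0 ≤ a) (hb : 0 < b) (hbc : b ≤ c) : a / c ≤ a / b := by
  rw [div_le_div_iff₀ (lt_of_lt_of_le hb hbc) hb]
  nlinarith

set_option maxHeartbeats 1000000 in
lemma myExists {k T C : ℝ} (hk : 1 ≤ k) (hT : T ≤ -4) (hC : 0 < C)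
    {M : ℝ → ℝ} (hMc : ContinuousOn M (Set.Iic T)) (hMb : ∀ t ≤ T, |M t| ≤ C / t ^ 2) :
    ∃ A : ℝ → ℝ, IsModeSolution k T M A ∧ ∀ t ≤ T, |A t| ≤ 6 * C / (k ^ 2 * t ^ 2) := by
  have h0 : (0:ℝ) < k := lt_of_lt_of_le one_pos hk
  -- the continuous bounded extension of M
  set Mt : ℝ → ℝ := fun s => M (min s T) with hMt_def
  have hMtc : Continuous Mt := by
    refine hMc.comp_continuous (continuous_id.min continuous_const) ?_
    intro x; exact min_le_right x T
  have hMtb : ∀ s, |Mt s| ≤ C / (min s T) ^ 2 := fun s => hMb _ (min_le_right s T)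
  have hMtB : ∀ s, |Mt s| ≤ C / 16 := by
    intro s
    refine le_trans (hMtb s) (myDivLe hC.le (by norm_num) ?_)
    have h1 : min s T ≤ -4 := le_trans (min_le_right s T) hT
    nlinarith
  have hmul : ∀ t : ℝ, Real.exp (k * -t) * Real.exp (k * t) = 1 := by
    intro t; rw [← Real.exp_add, show k * -t + k * t = 0 by ring, Real.exp_zero]
  -- the two integrals
  set u : ℝ → ℝ := fun r => ∫ σ in Set.Iic r, Real.exp (k * σ) * Mt σ with hu_def
  set w : ℝ → ℝ := fun r => ∫ σ in Set.Iic r, Real.exp (k * σ) * Mt (-σ) with hw_def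
  have hMtcn : Continuous fun σ => Mt (-σ) := hMtc.comp continuous_neg
  have hMtBn : ∀ s, |Mt (-s)| ≤ C / 16 := fun s => hMtB (-s)
  have hu : ∀ t, HasDerivAt u (Real.exp (k * t) * Mt t) t := fun t =>
    myKeyDeriv hk hMtc hMtB t
  have hw : ∀ t, HasDerivAt w (Real.exp (k * t) * Mt (-t)) t := fun t =>
    myKeyDeriv hk hMtcn hMtBn t
  have hwn : ∀ t, HasDerivAt (fun r => w (-r)) (-(Real.exp (k * -t) * Mt t)) t := by
    intro t
    have h := (hw (-t)).comp t (hasDerivAt_neg t)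
    simpa [neg_neg, Function.comp_def] using h
  have hen : ∀ t, HasDerivAt (fun r => Real.exp (k * -r)) (Real.exp (k * -t) * (k * (-1))) t :=
    fun t => ((hasDerivAt_neg t).const_mul k).exp
  have hep : ∀ t, HasDerivAt (fun r => Real.exp (k * r)) (Real.exp (k * t) * k) t := by
    intro t
    simpa using ((hasDerivAt_id t).const_mul k).exp
  set P : ℝ → ℝ := fun r => (Real.exp (k * -r) * u r + Real.exp (k * r) * w (-r)) / (2*k)
    with hP_def
  set Q : ℝ → ℝ := fun r => (Real.exp (k * r) * w (-r) - Real.exp (k * -r) * u r) / 2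
    with hQ_def
  have hP : ∀ t, HasDerivAt P (Q t) t := by
    intro t
    have h1 := (hen t).mul (hu t)
    have h2 := (hep t).mul (hwn t)
    have h3 := (h1.add h2).div_const (2*k)
    refine h3.congr_deriv (Eq.symm ?_)
    simp only [hQ_def]
    field_simp
    ring
  have hQ : ∀ t, HasDerivAt Q (k^2 * P t - Mt t) t := by
    intro t
    have h1 := (hen t).mul (hu t)
    have h2 := (hep t).mul (hwn t)
    have h3 := (h2.sub h1).div_const 2
    refine h3.congr_deriv (Eq.symm ?_)
    have hee : Real.exp (k * t) * Real.exp (-(k * t)) = 1 := by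
      rw [← Real.exp_add, show k * t + -(k * t) = 0 by ring, Real.exp_zero]
    simp only [hP_def, show ∀ x : ℝ, k * -x = -(k * x) from fun x => by ring]
    field_simp
    linear_combination (2 * Mt t) * hee
  -- solution A
  set c₀ : ℝ := -(P T) * Real.exp (k * -T) with hc₀_def
  set A : ℝ → ℝ := fun t => P t + c₀ * Real.exp (k * t) with hA_def
  set A' : ℝ → ℝ := fun t => Q t + c₀ * (Real.exp (k * t) * k) with hA'_def
  have hA : ∀ t, HasDerivAt A (A' t) t := fun t => (hP t).add ((hep t).const_mul c₀)
  have hA' : ∀ t, HasDerivAt A' (k^2 * A t - Mt t) t := by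
    intro t
    have h := (hQ t).add (((hep t).mul_const k).const_mul c₀)
    refine h.congr_deriv (Eq.symm ?_)
    simp only [hA_def]
    ring
  have hderivA : deriv A = A' := funext fun t => (hA t).deriv
  have hderivA' : deriv A' = fun t => k^2 * A t - Mt t := funext fun t => (hA' t).deriv
  have hdiffA : Differentiable ℝ A := fun t => (hA t).differentiableAt
  have hdiffA' : Differentiable ℝ A' := fun t => (hA' t).differentiableAt
  have hAcont : Continuous A := hdiffA.continuous
  -- smoothness
  have hsmooth : ContDiff ℝ 2 A := by
    rw [show (2 : WithTop ℕ∞) = 1 + 1 by norm_num, contDiff_succ_iff_deriv]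
    refine ⟨hdiffA, by simp, ?_⟩
    rw [hderivA, contDiff_one_iff_deriv]
    exact ⟨hdiffA', by
      rw [hderivA']
      exact (continuous_const.mul hAcont).sub hMtc⟩
  -- the equation
  have heqn : ∀ t ≤ T, -deriv (deriv A) t + k ^ 2 * A t = M t := by
    intro t ht
    rw [hderivA, hderivA']
    have hMtt : Mt t = M t := by simp only [hMt_def, min_eq_left ht]
    simp only []
    linarith [hMtt]
  have hAT : A T = 0 := by
    simp only [hA_def, hc₀_def]
    linear_combination (-(P T)) * hmul T
  -- ### bounds ###
  -- exp(k t/2) * k² t² ≤ 16 for t ≤ T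
  have hexphalf : ∀ t ≤ T, Real.exp (k * (t/2)) * (k^2 * t^2) ≤ 16 := by
    intro t ht
    have htneg : t ≤ -4 := le_trans ht hT
    have hx : 0 ≤ -(k * t) / 2 := by
      have : k * t < 0 := mul_neg_of_pos_of_neg h0 (by linarith)
      linarith
    have e1 : -(k * t)/4 + 1 ≤ Real.exp (-(k * t)/4) := by
      linarith [Real.add_one_le_exp (-(k * t)/4)]
    have e2 : Real.exp (-(k * t)/2) = Real.exp (-(k * t)/4) * Real.exp (-(k * t)/4) := by
      rw [← Real.exp_add]; congr 1; ring
    have e4 : Real.exp (k * (t/2)) * Real.exp (-(k * t)/2) = 1 := by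
      rw [← Real.exp_add, show k * (t/2) + -(k * t)/2 = 0 by ring, Real.exp_zero]
    have e5 : (k*t)^2/16 ≤ Real.exp (-(k * t)/2) := by
      nlinarith [Real.exp_pos (-(k * t)/4)]
    have e6 := mul_le_mul_of_nonneg_left e5 (Real.exp_pos (k * (t/2))).le
    nlinarith [e6, e4]
  -- t² exp(k(t-T)) ≤ T² for t ≤ T
  have hdecay : ∀ t ≤ T, t^2 * Real.exp (k * (t - T)) ≤ T^2 := by
    intro t ht
    have hy : 0 ≤ T - t := by linarith
    have d1 : (T - t)/2 + 1 ≤ Real.exp ((T - t)/2) := by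
      linarith [Real.add_one_le_exp ((T - t)/2)]
    have d2 : Real.exp (T - t) = Real.exp ((T - t)/2) * Real.exp ((T - t)/2) := by
      rw [← Real.exp_add]; congr 1; ring
    have hT2 : 0 ≤ T^2 + 2*T := by nlinarith
    have hT4' : 0 ≤ T^2 - 4 := by nlinarith
    have d2b : ((T - t)/2 + 1)^2 ≤ Real.exp (T - t) := by
      rw [d2]; nlinarith [Real.exp_pos ((T - t)/2)]
    have d3 : t^2 ≤ T^2 * Real.exp (T - t) := by
      nlinarith [mul_le_mul_of_nonneg_left d2b (sq_nonneg T),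
        mul_nonneg hy hT2, mul_nonneg (mul_nonneg hy hy) hT4']
    have d4 : Real.exp (k * (t - T)) * Real.exp (T - t) ≤ 1 := by
      rw [← Real.exp_add, Real.exp_le_one_iff,
        show k * (t - T) + (T - t) = (k - 1) * (t - T) by ring]
      nlinarith
    have d5 := mul_le_mul_of_nonneg_right d3 (Real.exp_pos (k * (t - T))).le
    nlinarith [d5, mul_le_mul_of_nonneg_left d4 (sq_nonneg T)]
  -- bound for u
  have hub : ∀ t ≤ T, |u t| ≤ (C / t^2) * (Real.exp (k * t) / k) := by
    intro t ht
    refine myKeyBound hk hMtc hMtB t ?_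
    intro σ hσ
    have hσT : σ ≤ T := le_trans hσ ht
    have h1 : Mt σ = M σ := by simp only [hMt_def, min_eq_left hσT]
    rw [h1]
    have htneg : t ≤ -4 := le_trans ht hT
    refine le_trans (hMb σ hσT) (myDivLe hC.le ?_ ?_)
    · nlinarith
    · nlinarith [le_trans hσT hT]
  -- the "near" bound for Mt
  have hnear : ∀ t ≤ T, ∀ s ≤ t/2, |Mt s| ≤ 4 * C / t^2 := by
    intro t ht s hs
    have hm : min s T ≤ t/2 := le_trans (min_le_left s T) hs
    have htneg : t ≤ -4 := le_trans ht hT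
    have hmT : min s T ≤ -4 := le_trans (min_le_right s T) hT
    have hmpos : (0:ℝ) < (min s T)^2 := by nlinarith
    refine le_trans (hMtb s) ?_
    rw [div_le_div_iff₀ hmpos (by nlinarith : (0:ℝ) < t^2)]
    have h1 : 0 ≤ t/2 - min s T := by linarith
    have h2 : 0 ≤ -(min s T + t/2) := by linarith
    nlinarith [mul_nonneg hC.le (mul_nonneg h1 h2)]
  -- bound for w
  have hwb : ∀ t ≤ T, |w (-t)| ≤ (C/16) * (Real.exp (k * -(t/2)) / k)
      + (4 * C / t^2) * (Real.exp (k * -t) / k) := by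
    intro t ht
    have htneg : t ≤ -4 := le_trans ht hT
    have ht2 : (0:ℝ) < t^2 := by nlinarith
    have hab : -(t/2) ≤ -t := by linarith
    have hsplit : w (-t) - w (-(t/2))
        = ∫ σ in (-(t/2))..(-t), Real.exp (k * σ) * Mt (-σ) :=
      intervalIntegral.integral_Iic_sub_Iic
        (myKeyInt hk hMtcn hMtBn (-(t/2))) (myKeyInt hk hMtcn hMtBn (-t))
    have b2a : |w (-(t/2))| ≤ (C/16) * (Real.exp (k * -(t/2)) / k) :=
      myKeyBound hk hMtcn hMtBn _ (fun σ _ => hMtBn σ)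
    have b2b : |∫ σ in (-(t/2))..(-t), Real.exp (k * σ) * Mt (-σ)|
        ≤ (4 * C / t^2) * (Real.exp (k * -t) / k) := by
      have hnorm : ‖∫ σ in (-(t/2))..(-t), Real.exp (k * σ) * Mt (-σ)‖
          ≤ |∫ σ in (-(t/2))..(-t), 4 * C / t^2 * Real.exp (k * σ)| := by
        refine intervalIntegral.norm_integral_le_abs_of_norm_le ?_ ?_
        · rw [uIoc_of_le hab]
          filter_upwards [ae_restrict_mem measurableSet_Ioc] with σ hσ
          have h1 : -σ ≤ t/2 := by linarith [hσ.1]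
          have h2 : |Real.exp (k*σ) * Mt (-σ)| = Real.exp (k*σ) * |Mt (-σ)| := by
            rw [abs_mul, abs_of_pos (Real.exp_pos _)]
          rw [Real.norm_eq_abs, h2, mul_comm (4 * C / t^2)]
          exact mul_le_mul_of_nonneg_left (hnear t ht (-σ) h1) (Real.exp_pos _).le
        · exact (continuous_const.mul (Real.continuous_exp.comp
            (continuous_const.mul continuous_id))).intervalIntegrable _ _
      rw [intervalIntegral.integral_const_mul, myExpIntervalVal hk] at hnorm
      rw [← Real.norm_eq_abs]
      refine le_trans hnorm ?_
      have he1 : Real.exp (k * -(t/2)) ≤ Real.exp (k * -t) :=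
        Real.exp_le_exp.mpr (by nlinarith)
      have hc4 : (0:ℝ) ≤ 4 * C / t^2 := div_nonneg (by linarith) (by positivity)
      have hinner : (0:ℝ) ≤ Real.exp (k * -t) / k - Real.exp (k * -(t/2)) / k :=
        sub_nonneg.mpr ((div_le_div_iff_of_pos_right h0).mpr he1)
      rw [abs_of_nonneg (mul_nonneg hc4 hinner)]
      refine mul_le_mul_of_nonneg_left ?_ hc4
      have : (0:ℝ) ≤ Real.exp (k * -(t/2)) / k := div_nonneg (Real.exp_pos _).le h0.le
      linarith
    have hw3 : w (-t) = w (-(t/2)) + (w (-t) - w (-(t/2))) := by ring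
    rw [hw3]
    refine le_trans (abs_add_le _ _) ?_
    rw [hsplit]
    exact add_le_add b2a b2b
    -- bound for P
  have hPb : ∀ t ≤ T, |P t| ≤ 3 * C / (k^2 * t^2) := by
    intro t ht
    have htneg : t ≤ -4 := le_trans ht hT
    have ht2 : (0:ℝ) < t^2 := by nlinarith
    have hkt2 : (0:ℝ) < k * t^2 := mul_pos h0 ht2
    have h1 : |P t| ≤ (Real.exp (k * -t) * |u t| + Real.exp (k * t) * |w (-t)|) / (2*k) := by
      simp only [hP_def]
      rw [abs_div, abs_of_pos (by positivity : (0:ℝ) < 2*k)]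
      rw [div_le_div_iff_of_pos_right (by positivity : (0:ℝ) < 2*k)]
      refine le_trans (abs_add_le _ _) ?_
      rw [abs_mul, abs_mul, abs_of_pos (Real.exp_pos _), abs_of_pos (Real.exp_pos _)]
    have p1 : Real.exp (k * -t) * |u t| ≤ C / (k * t^2) := by
      refine le_trans (mul_le_mul_of_nonneg_left (hub t ht) (Real.exp_pos _).le) ?_
      rw [show Real.exp (k * -t) * (C / t^2 * (Real.exp (k*t) / k))
        = (Real.exp (k * -t) * Real.exp (k*t)) * (C / (k * t^2)) by ring, hmul t, one_mul]
    have p2 : Real.exp (k * t) * |w (-t)| ≤ C / (k * t^2) + 4 * C / (k * t^2) := by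
      refine le_trans (mul_le_mul_of_nonneg_left (hwb t ht) (Real.exp_pos _).le) ?_
      rw [mul_add]
      refine add_le_add ?_ ?_
      · have hhalf : Real.exp (k * t) * Real.exp (k * -(t/2)) = Real.exp (k * (t/2)) := by
          rw [← Real.exp_add]; congr 1; ring
        rw [show Real.exp (k*t) * (C/16 * (Real.exp (k * -(t/2)) / k))
          = (Real.exp (k*t) * Real.exp (k * -(t/2))) * (C / (16 * k)) by ring, hhalf]
        rw [show Real.exp (k*(t/2)) * (C / (16*k)) = (Real.exp (k*(t/2)) * C) / (16*k) by ring,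
          div_le_div_iff₀ (by positivity : (0:ℝ) < 16*k) hkt2]
        have hxh := hexphalf t ht
        have hZpos := (Real.exp_pos (k * (t/2))).le
        nlinarith [mul_le_mul_of_nonneg_left hxh hC.le,
          mul_nonneg (mul_nonneg hC.le hZpos) ht2.le,
          mul_nonneg (mul_nonneg (mul_nonneg hC.le hZpos) ht2.le)
            (by nlinarith : (0:ℝ) ≤ k * (k - 1))]
      · rw [show Real.exp (k*t) * (4*C/t^2 * (Real.exp (k * -t) / k))
          = (Real.exp (k * -t) * Real.exp (k*t)) * (4 * C / (k * t^2)) by ring, hmul t, one_mul]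
    refine le_trans h1 ?_
    rw [div_le_iff₀ (by positivity : (0:ℝ) < 2*k)]
    have : C / (k * t^2) + (C / (k * t^2) + 4 * C / (k * t^2)) = 6 * C / (k * t^2) := by ring
    have hfin : 3 * C / (k^2 * t^2) * (2*k) = 6 * C / (k * t^2) := by
      field_simp
      ring
    rw [hfin]
    linarith [p1, p2]
  -- bound for A
  have hT2 : (0:ℝ) < T^2 := by nlinarith
  have hAb : ∀ t ≤ T, |A t| ≤ 6 * C / (k^2 * t^2) := by
    intro t ht
    have htneg : t ≤ -4 := le_trans ht hT
    have ht2 : (0:ℝ) < t^2 := by nlinarith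
    have h1 : |A t| ≤ |P t| + |P T| * Real.exp (k * (t - T)) := by
      simp only [hA_def, hc₀_def]
      refine le_trans (abs_add_le _ _) ?_
      have h2 : |-P T * Real.exp (k * -T) * Real.exp (k*t)|
          = |P T| * Real.exp (k * (t - T)) := by
        rw [abs_mul, abs_mul, abs_neg, abs_of_pos (Real.exp_pos _),
          abs_of_pos (Real.exp_pos _), mul_assoc, ← Real.exp_add,
          show k * -T + k * t = k * (t - T) by ring]
      rw [h2]
    have h2 : |P T| * Real.exp (k * (t - T)) ≤ 3 * C / (k^2 * t^2) := by
      refine le_trans (mul_le_mul_of_nonneg_right (hPb T le_rfl)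
        (Real.exp_pos (k * (t - T))).le) ?_
      rw [div_mul_eq_mul_div, div_le_div_iff₀ (mul_pos (pow_pos h0 2) hT2)
        (mul_pos (pow_pos h0 2) ht2)]
      nlinarith [mul_le_mul_of_nonneg_left (hdecay t ht)
        (by positivity : (0:ℝ) ≤ 3 * C * k^2)]
    calc |A t| ≤ |P t| + |P T| * Real.exp (k * (t - T)) := h1
    _ ≤ 3*C/(k^2*t^2) + 3*C/(k^2*t^2) := add_le_add (hPb t ht) h2
    _ = 6*C/(k^2*t^2) := by ring
  refine ⟨A, ⟨⟨6*C/(k^2*T^2), ?_⟩, hsmooth.contDiffOn, heqn, hAT⟩, hAb⟩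
  intro t ht
  refine le_trans (hAb t ht) (myDivLe (by linarith) (mul_pos (pow_pos h0 2) hT2) ?_)
  have htneg : t ≤ -4 := le_trans ht hT
  nlinarith [mul_nonneg (mul_nonneg (sq_nonneg k) (sub_nonneg.mpr ht))
    (by linarith : (0:ℝ) ≤ -t - T)]

/-- There is a constant `C₁ > 0` such that for every `k ≥ 1`, `T ≤ −4`, `C > 0` and
continuous `M` on `(−∞, T]` with `|M(t)| ≤ C/t²`, the problem `−A'' + k²A = M` on `(−∞, T]`,
`A(T) = 0`, has a unique bounded C² solution, and it satisfies `|A(t)| ≤ C₁ C/(k² t²)`. -/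
theorem stmt7 :
    ∃ C₁ : ℝ, 0 < C₁ ∧
      ∀ (k T C : ℝ), 1 ≤ k → T ≤ -4 → 0 < C →
        ∀ M : ℝ → ℝ, ContinuousOn M (Set.Iic T) →
          (∀ t ≤ T, |M t| ≤ C / t ^ 2) →
          (∃ A : ℝ → ℝ, IsModeSolution k T M A ∧
              ∀ t ≤ T, |A t| ≤ C₁ * C / (k ^ 2 * t ^ 2)) ∧
          (∀ A₁ A₂ : ℝ → ℝ, IsModeSolution k T M A₁ → IsModeSolution k T M A₂ →
            Set.EqOn A₁ A₂ (Set.Iic T)) := by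
  refine ⟨6, by norm_num, ?_⟩
  intro k T C hk hT hC M hMc hMb
  constructor
  · obtain ⟨A, hsol, hbd⟩ := myExists hk hT hC hMc hMb
    exact ⟨A, hsol, fun t ht => by simpa using hbd t ht⟩
  · exact fun A₁ A₂ h1 h2 => myUniq hk hT h1 h2
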